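/- Let G be a finite simple graph on n vertices with maximum degree Δ, and let φ' be a ρ-approximate MaxIS coloring of G with ρ = (Δ+2)/3. Then for every proper coloring φ of G, H(φ') ≤ H(φ) + log₂(Δ+2) − 0.14226. In other words, the minimum entropy coloring problem is approximated within an additive error of log₂(Δ+2) − 0.14226 on graphs with maximum degree Δ. -/

import Mathlib

open Finset

variable {V : Type*} [Fintype V] [DecidableEq V]

/-- A proper coloring of `G`: adjacent vertices receive different colors. -/
def IsProperColoring (G : SimpleGraph V) (φ : V → ℕ) : Prop :=
  ∀ v w : V, G.Adj v w → φ v ≠ φ w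

/-- `c_i`: the size of the color class `i`. -/
def classSize (φ : V → ℕ) (i : ℕ) : ℕ :=
  (Finset.univ.filter fun w => φ w = i).card

/-- `a_v`: the size of the color class containing `v`. -/
def classOfSize (φ : V → ℕ) (v : V) : ℕ := classSize φ (φ v)

/-- The generalized `p`-mean of the values `a_v` of a coloring. -/
noncomputable def colPMean (φ : V → ℕ) (p : ℝ) : ℝ :=
  ((1 / (Fintype.card V : ℝ)) * ∑ v : V, (classOfSize φ v : ℝ) ^ p) ^ (1 / p)

/-- An independent set of vertices. -/
def IsIndep (G : SimpleGraph V) (s : Finset V) : Prop :=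
  ∀ v ∈ s, ∀ w ∈ s, v ≠ w → ¬G.Adj v w

/-- A `ρ`-approximate MaxIS coloring: a proper coloring whose color classes can be ordered
`P 0, …, P (m-1)` so that each `P j` is an independent set of the graph that remains after
removing the previous classes, of size at least `1/ρ` times the independence number of the
remaining graph. -/
def IsRhoApproxMaxISColoring (G : SimpleGraph V) (ρ : ℝ) (φ : V → ℕ) : Prop :=
  IsProperColoring G φ ∧
  ∃ (m : ℕ) (P : ℕ → Finset V),
    (∀ v : V, ∃ j < m, v ∈ P j) ∧
    (∀ j < m,
      P j ⊆ Finset.univ \ (Finset.range j).biUnion P ∧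
      IsIndep G (P j) ∧
      ∀ T : Finset V, T ⊆ Finset.univ \ (Finset.range j).biUnion P →
        IsIndep G T → (T.card : ℝ) ≤ ρ * (P j).card) ∧
    (∀ j < m, ∀ v ∈ P j, (Finset.univ.filter fun w => φ w = φ v) = P j)

/-- The entropy (in bits) of a proper coloring: the entropy of the distribution obtained by
dividing the sizes of the (nonempty) color classes by `n`. -/
noncomputable def colEntropy (φ : V → ℕ) : ℝ :=
  -∑ i ∈ Finset.univ.image φ,
      ((classSize φ i : ℝ) / (Fintype.card V : ℝ)) *
        Real.logb 2 ((classSize φ i : ℝ) / (Fintype.card V : ℝ))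

lemma log98 : (0.117779 : ℝ) ≤ Real.log (9/8) := by
  have h := Real.abs_log_sub_add_sum_range_le (x := -(1/8)) (by rw [abs_of_nonpos] <;> norm_num) 5
  rw [show (1 : ℝ) - -(1/8) = 9/8 by norm_num] at h
  rw [show ∑ i ∈ Finset.range 5, (-(1/8):ℝ)^(i+1)/(i+1) = -(57893/491520 : ℝ) by
    simp [Finset.sum_range_succ]; norm_num] at h
  rw [abs_neg, abs_of_nonneg (by norm_num : (0:ℝ) ≤ 1/8)] at h
  have h3 := (abs_le.mp h).1
  norm_num at h3 ⊢
  linarith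

lemma num1 : (1 : ℝ) + 0.14226 * Real.log 2 ≤ Real.log 3 := by
  have h2 : (0.6931471803 : ℝ) < Real.log 2 := Real.log_two_gt_d9
  have h98 := log98
  have h9 : Real.log 9 = 3 * Real.log 2 + Real.log (9/8) := by
    rw [show (9:ℝ) = 8 * (9/8) by norm_num, Real.log_mul (by norm_num) (by norm_num),
      show (8:ℝ) = 2^3 by norm_num, Real.log_pow]
    push_cast; ring
  have h39 : Real.log 9 = 2 * Real.log 3 := by
    rw [show (9:ℝ) = 3^2 by norm_num, Real.log_pow]; push_cast; ring
  nlinarith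

lemma fact_le_prod {α : Type*} [DecidableEq α] (g : α → ℕ) (s : Finset α) :
    (s.card).factorial ≤ ∏ v ∈ s, (s.filter fun u => g v ≤ g u).card := by
  suffices H : ∀ (n : ℕ) (s : Finset α), s.card = n →
      (s.card).factorial ≤ ∏ v ∈ s, (s.filter fun u => g v ≤ g u).card from H _ s rfl
  intro n
  induction n with
  | zero => intro s hn; simp [Finset.card_eq_zero.mp hn]
  | succ n ih =>
    intro s hn
    obtain ⟨v0, hv0, hmin⟩ := s.exists_min_image g (Finset.card_pos.mp (by omega))
    have hc : (s.erase v0).card = n := by rw [Finset.card_erase_of_mem hv0, hn]; omega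
    have h1 : s.filter (fun u => g v0 ≤ g u) = s :=
      Finset.filter_true_of_mem fun u hu => hmin u hu
    rw [← Finset.mul_prod_erase s _ hv0, h1, hn]
    calc (n+1).factorial = (n+1) * n.factorial := Nat.factorial_succ n
      _ ≤ (n+1) * ∏ v ∈ s.erase v0, ((s.erase v0).filter fun u => g v ≤ g u).card :=
          Nat.mul_le_mul_left _ (hc ▸ ih (s.erase v0) hc)
      _ ≤ (n+1) * ∏ v ∈ s.erase v0, (s.filter fun u => g v ≤ g u).card := by
          refine Nat.mul_le_mul_left _ (Finset.prod_le_prod' fun v hv => ?_)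
          exact Finset.card_le_card (Finset.filter_subset_filter _ (Finset.erase_subset _ _))

lemma pow_le_exp_mul_factorial (n : ℕ) :
    (n:ℝ)^n ≤ Real.exp n * (n.factorial : ℝ) := by
  have h1 : (n:ℝ)^n / (n.factorial : ℝ) ≤ Real.exp n := by
    refine le_trans ?_ (Real.sum_le_exp_of_nonneg (Nat.cast_nonneg n) (n+1))
    exact Finset.single_le_sum (f := fun i => (n:ℝ)^i / (i.factorial : ℝ))
      (fun i _ => by positivity) (Finset.self_mem_range_succ n)
  rw [div_le_iff₀ (by positivity)] at h1
  linarith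

lemma colEntropy_eq (ψ : V → ℕ) (hn : 0 < Fintype.card V) :
    colEntropy ψ = Real.logb 2 (Fintype.card V)
      - (∑ v : V, Real.log (classOfSize ψ v)) / (Fintype.card V * Real.log 2) := by
  have hn' : ((Fintype.card V : ℝ)) ≠ 0 := Nat.cast_ne_zero.mpr hn.ne'
  have hlog2 : Real.log 2 ≠ 0 := (Real.log_pos (by norm_num)).ne'
  have hmaps : ∀ v : V, v ∈ (Finset.univ : Finset V) → ψ v ∈ Finset.univ.image ψ :=
    fun v _ => Finset.mem_image_of_mem ψ (Finset.mem_univ v)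
  have hcpos : ∀ i ∈ Finset.univ.image ψ, ((classSize ψ i : ℝ)) ≠ 0 := by
    intro i hi
    obtain ⟨v, _, hv⟩ := Finset.mem_image.mp hi
    have : 0 < classSize ψ i :=
      Finset.card_pos.mpr ⟨v, Finset.mem_filter.mpr ⟨Finset.mem_univ v, hv⟩⟩
    exact_mod_cast this.ne'
  have hfib : ∑ v : V, Real.log (classOfSize ψ v)
      = ∑ i ∈ Finset.univ.image ψ, (classSize ψ i : ℝ) * Real.log (classSize ψ i) := by
    rw [← Finset.sum_fiberwise_of_maps_to hmaps (fun v => Real.log (classOfSize ψ v))]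
    refine Finset.sum_congr rfl fun i hi => ?_
    have h1 : ∀ v ∈ Finset.univ.filter (fun v => ψ v = i),
        Real.log ((classOfSize ψ v : ℝ)) = Real.log ((classSize ψ i : ℝ)) := by
      intro v hv
      have hvi : ψ v = i := (Finset.mem_filter.mp hv).2
      rw [classOfSize, hvi]
    rw [Finset.sum_congr rfl h1, Finset.sum_const, nsmul_eq_mul]
    rfl
  have hcard : ((Fintype.card V : ℝ)) = ∑ i ∈ Finset.univ.image ψ, (classSize ψ i : ℝ) := by
    rw [← Nat.cast_sum]
    norm_cast
    rw [← Finset.card_univ]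
    exact Finset.card_eq_sum_card_fiberwise hmaps
  unfold colEntropy
  rw [hfib]
  have step1 : ∀ i ∈ Finset.univ.image ψ,
      ((classSize ψ i : ℝ) / (Fintype.card V : ℝ)) *
        Real.logb 2 ((classSize ψ i : ℝ) / (Fintype.card V : ℝ))
      = ((classSize ψ i : ℝ) * Real.log (classSize ψ i)
          - (classSize ψ i : ℝ) * Real.log (Fintype.card V)) / ((Fintype.card V : ℝ) * Real.log 2) := by
    intro i hi
    rw [Real.logb, Real.log_div (hcpos i hi) hn']
    field_simp
  rw [Finset.sum_congr rfl step1, ← Finset.sum_div, Finset.sum_sub_distrib, ← Finset.sum_mul,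
    ← hcard, Real.logb]
  field_simp
  ring

/-- if `φ'` is a `ρ`-approximate MaxIS coloring of a graph of maximum degree `Δ`
with `ρ = (Δ+2)/3`, then for every proper coloring `φ`,
`H(φ') ≤ H(φ) + log₂(Δ+2) - 0.14226`. -/
theorem maxIS_entropy_maxDegree (G : SimpleGraph V) [DecidableRel G.Adj]
    (φ' : V → ℕ)
    (hφ' : IsRhoApproxMaxISColoring G (((G.maxDegree : ℝ) + 2) / 3) φ')
    (φ : V → ℕ) (hφ : IsProperColoring G φ) :
    colEntropy φ' ≤ colEntropy φ + Real.logb 2 ((G.maxDegree : ℝ) + 2) - 0.14226 := by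
  classical
  have hlog2 : (0:ℝ) < Real.log 2 := Real.log_pos (by norm_num)
  have hΔ2 : (0:ℝ) < (G.maxDegree : ℝ) + 2 := by positivity
  have h2Δ : (2:ℝ) ≤ (G.maxDegree : ℝ) + 2 := by
    have : (0:ℝ) ≤ (G.maxDegree : ℝ) := Nat.cast_nonneg _
    linarith
  have hρpos : (0:ℝ) < ((G.maxDegree : ℝ) + 2)/3 := by positivity
  rcases Nat.eq_zero_or_pos (Fintype.card V) with hn0 | hnpos
  · -- empty graph
    have hV : (Finset.univ : Finset V) = ∅ := Finset.card_eq_zero.mp (by simpa using hn0)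
    have hE : ∀ ψ : V → ℕ, colEntropy ψ = 0 := by
      intro ψ; unfold colEntropy; rw [hV]; simp
    rw [hE, hE]
    have hl : Real.log 2 ≤ Real.log ((G.maxDegree : ℝ) + 2) :=
      Real.log_le_log (by norm_num) h2Δ
    have h1 : (1:ℝ) ≤ Real.logb 2 ((G.maxDegree : ℝ) + 2) := by
      rw [Real.logb, le_div_iff₀ hlog2]; linarith
    norm_num
    linarith
  obtain ⟨hprop', m, P, hcov, hstep, hcls⟩ := hφ'
  choose j hjm hjP using hcov
  have hmem : ∀ (v : V) (t : ℕ), t ≤ j v → v ∈ Finset.univ \ (Finset.range t).biUnion P := by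
    intro v t ht
    simp only [Finset.mem_sdiff, Finset.mem_univ, true_and, Finset.mem_biUnion, Finset.mem_range,
      not_exists, not_and]
    intro k hk
    have h1 := (hstep (j v) (hjm v)).1 (hjP v)
    simp only [Finset.mem_sdiff, Finset.mem_univ, true_and, Finset.mem_biUnion, Finset.mem_range,
      not_exists, not_and] at h1
    exact h1 k (lt_of_lt_of_le hk ht)
  have hb : ∀ v : V, classOfSize φ' v = (P (j v)).card := by
    intro v
    have h := hcls (j v) (hjm v) v (hjP v)
    unfold classOfSize classSize
    rw [h]
  have hbpos : ∀ v : V, 0 < (P (j v)).card := fun v => Finset.card_pos.mpr ⟨v, hjP v⟩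
  set ρ : ℝ := ((G.maxDegree : ℝ) + 2)/3 with hρdef
  set r : V → ℕ := fun v =>
    ((Finset.univ.filter fun w => φ w = φ v).filter fun u => j v ≤ j u).card with hrdef
  have hrρ : ∀ v, (r v : ℝ) ≤ ρ * (P (j v)).card := by
    intro v
    apply (hstep (j v) (hjm v)).2.2
    · intro u hu
      exact hmem u (j v) (Finset.mem_filter.mp hu).2
    · intro x hx y hy hxy hadj
      have hx2 : φ x = φ v := (Finset.mem_filter.mp (Finset.mem_filter.mp hx).1).2
      have hy2 : φ y = φ v := (Finset.mem_filter.mp (Finset.mem_filter.mp hy).1).2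
      exact hφ x y hadj (hx2.trans hy2.symm)
  -- key per-class inequality
  have hkey : ∀ i ∈ Finset.univ.image φ,
      (classSize φ i : ℝ) * Real.log (classSize φ i)
        ≤ (classSize φ i : ℝ) + ∑ v ∈ Finset.univ.filter (fun w => φ w = i),
            Real.log (ρ * (P (j v)).card) := by
    intro i hi
    set C : Finset V := Finset.univ.filter (fun w => φ w = i) with hC
    have hcsz : classSize φ i = C.card := rfl
    obtain ⟨w0, _, hw0⟩ := Finset.mem_image.mp hi
    have hCne : C.Nonempty := ⟨w0, Finset.mem_filter.mpr ⟨Finset.mem_univ _, hw0⟩⟩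
    have hc1 : 0 < C.card := Finset.card_pos.mpr hCne
    have hfact : (C.card).factorial ≤ ∏ v ∈ C, r v := by
      refine (fact_le_prod j C).trans (le_of_eq (Finset.prod_congr rfl fun v hv => ?_))
      have hvi : φ v = i := (Finset.mem_filter.mp hv).2
      have hQC : (Finset.univ.filter fun w => φ w = φ v) = C := by
        rw [hC]; ext w; simp [hvi]
      rw [hrdef]
      simp only
      rw [hQC]
    have hprodpos : ∀ v ∈ C, (0:ℝ) < ρ * ((P (j v)).card : ℝ) := by
      intro v hv
      have := hbpos v
      positivity
    have hpow : ((C.card : ℝ))^(C.card) ≤ Real.exp (C.card) * ∏ v ∈ C, (ρ * ((P (j v)).card : ℝ)) := by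
      calc ((C.card : ℝ))^(C.card) ≤ Real.exp (C.card) * ((C.card).factorial : ℝ) :=
            pow_le_exp_mul_factorial _
        _ ≤ Real.exp (C.card) * ∏ v ∈ C, (r v : ℝ) := by
            refine mul_le_mul_of_nonneg_left ?_ (Real.exp_nonneg _)
            rw [← Nat.cast_prod]
            exact_mod_cast hfact
        _ ≤ _ := by
            refine mul_le_mul_of_nonneg_left ?_ (Real.exp_nonneg _)
            exact Finset.prod_le_prod (fun v _ => by positivity) (fun v _ => hrρ v)
    have hlog := Real.log_le_log (by positivity) hpow
    rw [Real.log_pow, Real.log_mul (Real.exp_ne_zero _)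
        (ne_of_gt (Finset.prod_pos hprodpos)), Real.log_exp,
      Real.log_prod (fun v hv => (hprodpos v hv).ne')] at hlog
    rw [hcsz]
    calc (C.card : ℝ) * Real.log (C.card) = (C.card : ℕ) * Real.log (C.card) := by norm_num
      _ ≤ (C.card : ℝ) + ∑ v ∈ C, Real.log (ρ * ((P (j v)).card : ℝ)) := by
          exact_mod_cast hlog
  -- sum over classes
  have hmaps : ∀ v : V, v ∈ (Finset.univ : Finset V) → φ v ∈ Finset.univ.image φ :=
    fun v _ => Finset.mem_image_of_mem φ (Finset.mem_univ v)
  have hfib1 : ∑ v : V, Real.log (classOfSize φ v)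
      = ∑ i ∈ Finset.univ.image φ, (classSize φ i : ℝ) * Real.log (classSize φ i) := by
    rw [← Finset.sum_fiberwise_of_maps_to hmaps (fun v => Real.log (classOfSize φ v))]
    refine Finset.sum_congr rfl fun i hi => ?_
    have h1 : ∀ v ∈ Finset.univ.filter (fun v => φ v = i),
        Real.log ((classOfSize φ v : ℝ)) = Real.log ((classSize φ i : ℝ)) := by
      intro v hv
      have hvi : φ v = i := (Finset.mem_filter.mp hv).2
      rw [classOfSize, hvi]
    rw [Finset.sum_congr rfl h1, Finset.sum_const, nsmul_eq_mul]
    rfl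
  have hfib2 : ∑ v : V, Real.log (ρ * ((P (j v)).card : ℝ))
      = ∑ i ∈ Finset.univ.image φ, ∑ v ∈ Finset.univ.filter (fun w => φ w = i),
          Real.log (ρ * ((P (j v)).card : ℝ)) :=
    (Finset.sum_fiberwise_of_maps_to hmaps _).symm
  have hcard : ((Fintype.card V : ℝ)) = ∑ i ∈ Finset.univ.image φ, (classSize φ i : ℝ) := by
    rw [← Nat.cast_sum]
    norm_cast
    rw [← Finset.card_univ]
    exact Finset.card_eq_sum_card_fiberwise hmaps
  have hS : ∑ v : V, Real.log (classOfSize φ v)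
      ≤ (Fintype.card V : ℝ) + ∑ v : V, Real.log (ρ * ((P (j v)).card : ℝ)) := by
    rw [hfib1, hfib2, hcard, ← Finset.sum_add_distrib]
    exact Finset.sum_le_sum hkey
  have hsplit : ∑ v : V, Real.log (ρ * ((P (j v)).card : ℝ))
      = (Fintype.card V : ℝ) * Real.log ρ + ∑ v : V, Real.log (classOfSize φ' v) := by
    have h1 : ∀ v : V, Real.log (ρ * ((P (j v)).card : ℝ))
        = Real.log ρ + Real.log ((classOfSize φ' v : ℝ)) := by
      intro v
      rw [hb v, Real.log_mul hρpos.ne' (by exact_mod_cast (hbpos v).ne')]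
    rw [Finset.sum_congr rfl (fun v _ => h1 v), Finset.sum_add_distrib, Finset.sum_const,
      Finset.card_univ, nsmul_eq_mul]
  -- final numeric assembly
  have hlogρ : Real.log ρ = Real.log ((G.maxDegree : ℝ) + 2) - Real.log 3 := by
    rw [hρdef, Real.log_div hΔ2.ne' (by norm_num)]
  have hnum := num1
  have hmain : ∑ v : V, Real.log (classOfSize φ v)
      - ∑ v : V, Real.log (classOfSize φ' v)
      ≤ (Fintype.card V : ℝ) * (Real.log ((G.maxDegree : ℝ) + 2) - 0.14226 * Real.log 2) := by
    have hn0 : (0:ℝ) ≤ (Fintype.card V : ℝ) := Nat.cast_nonneg _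
    have h1 : ∑ v : V, Real.log (classOfSize φ v)
        - ∑ v : V, Real.log (classOfSize φ' v)
        ≤ (Fintype.card V : ℝ) * (1 + Real.log ρ) := by
      rw [hsplit] at hS; linarith [hS]
    have h2 : (1:ℝ) + Real.log ρ ≤ Real.log ((G.maxDegree : ℝ) + 2) - 0.14226 * Real.log 2 := by
      rw [hlogρ]; linarith
    calc _ ≤ (Fintype.card V : ℝ) * (1 + Real.log ρ) := h1
      _ ≤ _ := mul_le_mul_of_nonneg_left h2 hn0
  rw [colEntropy_eq φ' hnpos, colEntropy_eq φ hnpos]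
  have hnR : (0:ℝ) < (Fintype.card V : ℝ) := by exact_mod_cast hnpos
  have hden : (0:ℝ) < (Fintype.card V : ℝ) * Real.log 2 := by positivity
  have hfin : (∑ v : V, Real.log (classOfSize φ v)) / ((Fintype.card V : ℝ) * Real.log 2)
      - (∑ v : V, Real.log (classOfSize φ' v)) / ((Fintype.card V : ℝ) * Real.log 2)
      ≤ Real.logb 2 ((G.maxDegree : ℝ) + 2) - 0.14226 := by
    rw [div_sub_div_same, div_le_iff₀ hden, Real.logb]
    calc _ ≤ (Fintype.card V : ℝ) * (Real.log ((G.maxDegree : ℝ) + 2) - 0.14226 * Real.log 2) :=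
          hmain
      _ = (Real.log ((G.maxDegree : ℝ) + 2) / Real.log 2 - 0.14226) * ((Fintype.card V : ℝ) * Real.log 2) := by
          field_simp
  linarith [hfin]
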